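/- With the notation of the context, for every measurable function F : Z^T → [0,∞] one has Σ_{k∈{1,…,M}^T} ∫_{Z^{T·M}} b(k|v) F(v^{(k)}) (π⊗Φ)(v) ν^{⊗TM}(dv) = Σ_{k∈{1,…,M}^T} ∫_{Z^{T·M}} b(k|v) F(v^{(k)}) ψ̄(v) ν^{⊗TM}(dv); that is, the expectation of a backward-sampled path functional is the same whether the particles are generated by the conditional SMC algorithm started from a π-distributed path or by the unconditional particle filter reweighted by its normalising-constant estimator. -/

import Mathlib

open MeasureTheory Finset
open scoped ENNReal

namespace SSM16

variable {Z : Type*}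

/-- The path `v^{(k)}` extracted from the particle array `v`. -/
def pathOf (n m : ℕ) (v : Fin (n + 1) → Fin (m + 1) → Z)
    (k : Fin (n + 1) → Fin (m + 1)) : Fin (n + 1) → Z := fun t => v t (k t)

/-- The constant index path `𝟏`. -/
def onePath (n m : ℕ) : Fin (n + 1) → Fin (m + 1) := fun _ => 0

/-- The unnormalised target density `γ(z)`. -/
noncomputable def gammaSSM (n : ℕ) (m₀ : Z → ℝ) (f : Z → Z → ℝ)
    (w : Fin (n + 1) → Z → ℝ) (z : Fin (n + 1) → Z) : ℝ :=
  m₀ (z 0) * (∏ t : Fin n, f (z t.castSucc) (z t.succ)) * ∏ t, w t (z t)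

/-- The backward-sampling probabilities `b(k|v)`. -/
noncomputable def bBack (n m : ℕ) (f : Z → Z → ℝ) (w : Fin (n + 1) → Z → ℝ)
    (k : Fin (n + 1) → Fin (m + 1)) (v : Fin (n + 1) → Fin (m + 1) → Z) : ℝ :=
  (w (Fin.last n) (v (Fin.last n) (k (Fin.last n))) /
      ∑ i, w (Fin.last n) (v (Fin.last n) i)) *
    ∏ t : Fin n,
      (w t.castSucc (v t.castSucc (k t.castSucc)) *
          f (v t.castSucc (k t.castSucc)) (v t.succ (k t.succ))) /
        ∑ i, w t.castSucc (v t.castSucc i) * f (v t.castSucc i) (v t.succ (k t.succ))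

/-- The particle-filter density `ψ(v)`. -/
noncomputable def psiPF (n m : ℕ) (m₀ : Z → ℝ) (f : Z → Z → ℝ)
    (w : Fin (n + 1) → Z → ℝ) (v : Fin (n + 1) → Fin (m + 1) → Z) : ℝ :=
  (∏ i, m₀ (v 0 i)) *
    ∏ t : Fin n, ∏ i : Fin (m + 1),
      (∑ j, w t.castSucc (v t.castSucc j) * f (v t.castSucc j) (v t.succ i)) /
        ∑ j, w t.castSucc (v t.castSucc j)

/-- The normalising-constant estimator `Ĉ(v)`. -/
noncomputable def Chat (n m : ℕ) (w : Fin (n + 1) → Z → ℝ)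
    (v : Fin (n + 1) → Fin (m + 1) → Z) : ℝ :=
  ∏ t, ((m : ℝ) + 1)⁻¹ * ∑ i, w t (v t i)

/-- The conditional-SMC density `(π⊗Φ)(v)`, with `π = γ/C`. -/
noncomputable def piPhi (n m : ℕ) (m₀ : Z → ℝ) (f : Z → Z → ℝ)
    (w : Fin (n + 1) → Z → ℝ) (C : ℝ) (v : Fin (n + 1) → Fin (m + 1) → Z) : ℝ :=
  (gammaSSM n m₀ f w (pathOf n m v (onePath n m)) / C) *
    (∏ i ∈ univ.erase (0 : Fin (m + 1)), m₀ (v 0 i)) *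
    ∏ t : Fin n, ∏ i ∈ univ.erase (0 : Fin (m + 1)),
      (∑ j, w t.castSucc (v t.castSucc j) * f (v t.castSucc j) (v t.succ i)) /
        ∑ j, w t.castSucc (v t.castSucc j)


-- auxiliary lemmas (to be inserted above the theorem)

lemma sum_markov {m : ℕ} : ∀ {n : ℕ} (A : Fin n → Fin (m+1) → Fin (m+1) → ℝ)
    (B : Fin (m+1) → ℝ), (∀ t i, ∑ j, A t j i = 1) → (∑ i, B i = 1) →
    ∑ k : Fin (n+1) → Fin (m+1),
      (B (k (Fin.last n)) * ∏ t : Fin n, A t (k t.castSucc) (k t.succ)) = 1 := by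
  intro n
  induction n with
  | zero =>
    intro A B hA hB
    rw [← hB]
    exact Fintype.sum_equiv (Equiv.funUnique (Fin 1) (Fin (m+1))) _ _ (fun k => by
      simp [Equiv.funUnique, Fin.last])
  | succ n ih =>
    intro A B hA hB
    rw [← Equiv.sum_comp (Fin.consEquiv (fun _ : Fin (n+2) => Fin (m+1)))]
    rw [Fintype.sum_prod_type]
    have step : ∀ (x : Fin (m+1)) (g : (i : Fin (n+1)) → Fin (m+1)),
        B ((Fin.consEquiv (fun _ : Fin (n+2) => Fin (m+1))) (x, g) (Fin.last (n+1))) *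
          ∏ t : Fin (n+1), A t ((Fin.consEquiv (fun _ : Fin (n+2) => Fin (m+1))) (x, g) t.castSucc)
            ((Fin.consEquiv (fun _ : Fin (n+2) => Fin (m+1))) (x, g) t.succ)
        = A 0 x (g 0) * (B (g (Fin.last n)) * ∏ t : Fin n, A t.succ (g t.castSucc) (g t.succ)) := by
      intro x g
      have hc : ∀ j, (Fin.consEquiv (fun _ : Fin (n+2) => Fin (m+1))) (x, g) j
          = (Fin.cons x g : ∀ _ : Fin (n+2), Fin (m+1)) j := fun j => rfl
      simp only [hc]
      rw [Fin.prod_univ_succ]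
      have h1 : (Fin.cons x g : ∀ _ : Fin (n+2), Fin (m+1)) (Fin.last (n+1)) = g (Fin.last n) := by
        rw [← Fin.succ_last, Fin.cons_succ]
      have h2 : ∀ t : Fin n, (Fin.cons x g : ∀ _ : Fin (n+2), Fin (m+1)) (t.succ.castSucc) = g t.castSucc := by
        intro t; rw [← Fin.succ_castSucc, Fin.cons_succ]
      simp only [h1, Fin.castSucc_zero, Fin.cons_zero, Fin.cons_succ, h2]
      ring
    calc ∑ x, ∑ g : (i : Fin (n+1)) → Fin (m+1),
          B ((Fin.consEquiv (fun _ : Fin (n+2) => Fin (m+1))) (x, g) (Fin.last (n+1))) *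
            ∏ t : Fin (n+1), A t ((Fin.consEquiv (fun _ : Fin (n+2) => Fin (m+1))) (x, g) t.castSucc)
              ((Fin.consEquiv (fun _ : Fin (n+2) => Fin (m+1))) (x, g) t.succ)
        = ∑ x, ∑ g : (i : Fin (n+1)) → Fin (m+1),
            A 0 x (g 0) * (B (g (Fin.last n)) * ∏ t : Fin n, A t.succ (g t.castSucc) (g t.succ)) := by
          exact Finset.sum_congr rfl fun x _ => Finset.sum_congr rfl fun g _ => step x g
      _ = ∑ g : (i : Fin (n+1)) → Fin (m+1), (∑ x, A 0 x (g 0)) *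
            (B (g (Fin.last n)) * ∏ t : Fin n, A t.succ (g t.castSucc) (g t.succ)) := by
          rw [Finset.sum_comm]
          exact Finset.sum_congr rfl fun g _ => by rw [Finset.sum_mul]
      _ = 1 := by
          simp only [hA, one_mul]
          exact ih (fun t => A t.succ) B (fun t i => hA t.succ i) hB

def swapArr (n m : ℕ) (k : Fin (n + 1) → Fin (m + 1))
    (v : Fin (n + 1) → Fin (m + 1) → Z) : Fin (n + 1) → Fin (m + 1) → Z :=
  fun t i => v t (Equiv.swap 0 (k t) i)

lemma prod_erase_swap {M : Type*} [CommMonoid M] {m : ℕ} (c : Fin (m+1)) (g : Fin (m+1) → M) :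
    ∏ i ∈ univ.erase (0 : Fin (m+1)), g (Equiv.swap 0 c i) = ∏ i ∈ univ.erase c, g i := by
  refine Finset.prod_bij' (fun a _ => Equiv.swap 0 c a) (fun a _ => Equiv.swap 0 c a)
    ?_ ?_ ?_ ?_ ?_
  · intro a ha
    simp only [Finset.mem_erase, Finset.mem_univ, and_true] at ha ⊢
    exact fun h => ha ((Equiv.swap 0 c).injective (h.trans (Equiv.swap_apply_left 0 c).symm))
  · intro a ha
    simp only [Finset.mem_erase, Finset.mem_univ, and_true] at ha ⊢
    exact fun h => ha ((Equiv.swap 0 c).injective (h.trans (Equiv.swap_apply_right 0 c).symm))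
  · intro a _; exact Equiv.swap_apply_self 0 c a
  · intro a _; exact Equiv.swap_apply_self 0 c a
  · intro a _; rfl

lemma bBack_swapArr (n m : ℕ) (f : Z → Z → ℝ) (w : Fin (n + 1) → Z → ℝ)
    (k : Fin (n + 1) → Fin (m + 1)) (v : Fin (n + 1) → Fin (m + 1) → Z) :
    bBack n m f w k (swapArr n m k v) = bBack n m f w (onePath n m) v := by
  simp only [bBack, swapArr, onePath, Equiv.swap_apply_right]
  congr 1
  · congr 1
    exact Equiv.sum_comp (Equiv.swap (0 : Fin (m+1)) (k (Fin.last n)))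
      (fun i => w (Fin.last n) (v (Fin.last n) i))
  · refine Finset.prod_congr rfl fun t _ => ?_
    congr 1
    exact Equiv.sum_comp (Equiv.swap (0 : Fin (m+1)) (k t.castSucc))
      (fun i => w t.castSucc (v t.castSucc i) * f (v t.castSucc i) (v t.succ 0))

lemma pathOf_swapArr (n m : ℕ) (k : Fin (n + 1) → Fin (m + 1))
    (v : Fin (n + 1) → Fin (m + 1) → Z) :
    pathOf n m (swapArr n m k v) k = pathOf n m v (onePath n m) := by
  funext t
  simp [pathOf, swapArr, onePath, Equiv.swap_apply_right]

lemma psiPF_swapArr (n m : ℕ) (m₀ : Z → ℝ) (f : Z → Z → ℝ) (w : Fin (n + 1) → Z → ℝ)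
    (k : Fin (n + 1) → Fin (m + 1)) (v : Fin (n + 1) → Fin (m + 1) → Z) :
    psiPF n m m₀ f w (swapArr n m k v) = psiPF n m m₀ f w v := by
  simp only [psiPF, swapArr]
  congr 1
  · exact Equiv.prod_comp (Equiv.swap (0 : Fin (m+1)) (k 0)) (fun i => m₀ (v 0 i))
  · refine Finset.prod_congr rfl fun t _ => ?_
    have h1 : ∀ x : Fin (m+1),
        (∑ j, w t.castSucc (v t.castSucc (Equiv.swap 0 (k t.castSucc) j)) *
          f (v t.castSucc (Equiv.swap 0 (k t.castSucc) j)) (v t.succ x))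
        = ∑ j, w t.castSucc (v t.castSucc j) * f (v t.castSucc j) (v t.succ x) :=
      fun x => Equiv.sum_comp (Equiv.swap (0 : Fin (m+1)) (k t.castSucc))
        (fun j => w t.castSucc (v t.castSucc j) * f (v t.castSucc j) (v t.succ x))
    have h2 : (∑ j, w t.castSucc (v t.castSucc (Equiv.swap 0 (k t.castSucc) j)))
        = ∑ j, w t.castSucc (v t.castSucc j) :=
      Equiv.sum_comp (Equiv.swap (0 : Fin (m+1)) (k t.castSucc))
        (fun j => w t.castSucc (v t.castSucc j))
    simp only [h1, h2]
    exact Equiv.prod_comp (Equiv.swap (0 : Fin (m+1)) (k t.succ))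
      (fun i => (∑ j, w t.castSucc (v t.castSucc j) * f (v t.castSucc j) (v t.succ i)) /
        ∑ j, w t.castSucc (v t.castSucc j))

lemma Chat_swapArr (n m : ℕ) (w : Fin (n + 1) → Z → ℝ)
    (k : Fin (n + 1) → Fin (m + 1)) (v : Fin (n + 1) → Fin (m + 1) → Z) :
    Chat n m w (swapArr n m k v) = Chat n m w v := by
  simp only [Chat, swapArr]
  refine Finset.prod_congr rfl fun t _ => ?_
  congr 1
  exact Equiv.sum_comp (Equiv.swap (0 : Fin (m+1)) (k t)) (fun i => w t (v t i))

lemma piPhi_swapArr (n m : ℕ) (m₀ : Z → ℝ) (f : Z → Z → ℝ) (w : Fin (n + 1) → Z → ℝ)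
    (C : ℝ) (k : Fin (n + 1) → Fin (m + 1)) (v : Fin (n + 1) → Fin (m + 1) → Z) :
    piPhi n m m₀ f w C (swapArr n m k v)
      = gammaSSM n m₀ f w (pathOf n m v k) / C *
        ((∏ i ∈ univ.erase (k 0), m₀ (v 0 i)) *
          ∏ t : Fin n, ∏ i ∈ univ.erase (k t.succ),
            (∑ j, w t.castSucc (v t.castSucc j) * f (v t.castSucc j) (v t.succ i)) /
              (∑ j, w t.castSucc (v t.castSucc j))) := by
  have hg : pathOf n m (swapArr n m k v) (onePath n m) = pathOf n m v k := by
    funext t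
    simp [pathOf, swapArr, onePath, Equiv.swap_apply_left]
  simp only [piPhi, swapArr]
  rw [hg, mul_assoc]
  rw [prod_erase_swap (M := ℝ) (m := m) (k 0) (fun i => m₀ (v 0 i))]
  congr 1
  congr 1
  refine Finset.prod_congr rfl fun t _ => ?_
  have h1 : ∀ x : Fin (m+1),
      (∑ j, w t.castSucc (v t.castSucc (Equiv.swap 0 (k t.castSucc) j)) *
        f (v t.castSucc (Equiv.swap 0 (k t.castSucc) j)) (v t.succ x))
      = ∑ j, w t.castSucc (v t.castSucc j) * f (v t.castSucc j) (v t.succ x) :=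
    fun x => Equiv.sum_comp (Equiv.swap (0 : Fin (m+1)) (k t.castSucc))
      (fun j => w t.castSucc (v t.castSucc j) * f (v t.castSucc j) (v t.succ x))
  have h2 : (∑ j, w t.castSucc (v t.castSucc (Equiv.swap 0 (k t.castSucc) j)))
      = ∑ j, w t.castSucc (v t.castSucc j) :=
    Equiv.sum_comp (Equiv.swap (0 : Fin (m+1)) (k t.castSucc))
      (fun j => w t.castSucc (v t.castSucc j))
  simp only [h1, h2]
  exact prod_erase_swap (k t.succ)
    (fun i => (∑ j, w t.castSucc (v t.castSucc j) * f (v t.castSucc j) (v t.succ i)) /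
      ∑ j, w t.castSucc (v t.castSucc j))

lemma core_identity (n m : ℕ) (m₀ : Z → ℝ) (f : Z → Z → ℝ) (w : Fin (n + 1) → Z → ℝ)
    (hfpos : ∀ z z', 0 < f z z') (hwpos : ∀ t z, 0 < w t z)
    (k : Fin (n + 1) → Fin (m + 1)) (v : Fin (n + 1) → Fin (m + 1) → Z) :
    gammaSSM n m₀ f w (pathOf n m v k) *
      ((∏ i ∈ univ.erase (k 0), m₀ (v 0 i)) *
        ∏ t : Fin n, ∏ i ∈ univ.erase (k t.succ),
          (∑ j, w t.castSucc (v t.castSucc j) * f (v t.castSucc j) (v t.succ i)) /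
            (∑ j, w t.castSucc (v t.castSucc j)))
    = ((m : ℝ) + 1) ^ (n + 1) *
        (bBack n m f w k v * (psiPF n m m₀ f w v * Chat n m w v)) := by
  have hSpos : ∀ t : Fin (n + 1), 0 < ∑ i, w t (v t i) :=
    fun t => Finset.sum_pos (fun i _ => hwpos _ _) univ_nonempty
  have hDpos : ∀ (t : Fin n) (i : Fin (m + 1)),
      0 < ∑ j, w t.castSucc (v t.castSucc j) * f (v t.castSucc j) (v t.succ i) :=
    fun t i => Finset.sum_pos (fun j _ => mul_pos (hwpos _ _) (hfpos _ _)) univ_nonempty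
  have hSne : ∀ t : Fin (n + 1), (∑ i, w t (v t i)) ≠ 0 := fun t => (hSpos t).ne'
  have hDne : ∀ (t : Fin n) (i : Fin (m + 1)),
      (∑ j, w t.castSucc (v t.castSucc j) * f (v t.castSucc j) (v t.succ i)) ≠ 0 :=
    fun t i => (hDpos t i).ne'
  have hm1 : ((m : ℝ) + 1) ≠ 0 := by positivity
  have hsplitD : ∀ t : Fin n,
      (∏ i : Fin (m + 1),
        (∑ j, w t.castSucc (v t.castSucc j) * f (v t.castSucc j) (v t.succ i)))
      = (∑ j, w t.castSucc (v t.castSucc j) * f (v t.castSucc j) (v t.succ (k t.succ))) *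
        ∏ i ∈ univ.erase (k t.succ),
          (∑ j, w t.castSucc (v t.castSucc j) * f (v t.castSucc j) (v t.succ i)) :=
    fun t => (Finset.mul_prod_erase _ _ (Finset.mem_univ (k t.succ))).symm
  have hsplitM : (∏ i, m₀ (v 0 i)) = m₀ (v 0 (k 0)) * ∏ i ∈ univ.erase (k 0), m₀ (v 0 i) :=
    (Finset.mul_prod_erase _ _ (Finset.mem_univ (k 0))).symm
  simp only [gammaSSM, pathOf, bBack, psiPF, Chat]
  simp only [Finset.prod_div_distrib, Finset.prod_mul_distrib, Finset.prod_const,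
    Finset.card_univ, Fintype.card_fin, Finset.card_erase_of_mem (Finset.mem_univ _),
    Nat.add_sub_cancel, Finset.prod_pow, hsplitD, hsplitM]
  rw [Fin.prod_univ_castSucc (f := fun t : Fin (n + 1) => w t (v t (k t)))]
  rw [Fin.prod_univ_castSucc (f := fun t : Fin (n + 1) => ∑ i, w t (v t i))]
  have hP2 : (∏ t : Fin n,
      ∑ j, w t.castSucc (v t.castSucc j) * f (v t.castSucc j) (v t.succ (k t.succ))) ≠ 0 :=
    Finset.prod_ne_zero_iff.2 fun t _ => hDne t (k t.succ)
  have hP3 : (∏ t : Fin n, ∑ i, w t.castSucc (v t.castSucc i)) ≠ 0 :=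
    Finset.prod_ne_zero_iff.2 fun t _ => hSne t.castSucc
  have hs := hSne (Fin.last n)
  revert hP2 hP3 hs hm1
  generalize (m₀ (v 0 (k 0))) = A
  generalize (∏ x : Fin n, f (v x.castSucc (k x.castSucc)) (v x.succ (k x.succ))) = B
  generalize (∏ i : Fin n, w i.castSucc (v i.castSucc (k i.castSucc))) = W
  generalize (w (Fin.last n) (v (Fin.last n) (k (Fin.last n)))) = c
  generalize (∏ i ∈ Finset.univ.erase (k 0), m₀ (v 0 i)) = Pm
  generalize (∏ x : Fin n, ∏ x_1 ∈ Finset.univ.erase (k x.succ),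
      ∑ j : Fin (m + 1), w x.castSucc (v x.castSucc j) * f (v x.castSucc j) (v x.succ x_1)) = P1
  generalize (∏ x : Fin n,
      ∑ i : Fin (m + 1), w x.castSucc (v x.castSucc i) * f (v x.castSucc i) (v x.succ (k x.succ))) = P2
  generalize (∏ x : Fin n, ∑ j : Fin (m + 1), w x.castSucc (v x.castSucc j)) = P3
  generalize (∑ i : Fin (m + 1), w (Fin.last n) (v (Fin.last n) i)) = S
  generalize ((m : ℝ) + 1) = K
  intro hm1 hP2 hP3 hs
  field_simp
  rw [one_div, inv_pow]
  field_simp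
  ring

lemma sum_bBack (n m : ℕ) (f : Z → Z → ℝ) (w : Fin (n + 1) → Z → ℝ)
    (hfpos : ∀ z z', 0 < f z z') (hwpos : ∀ t z, 0 < w t z)
    (v : Fin (n + 1) → Fin (m + 1) → Z) :
    ∑ k : Fin (n + 1) → Fin (m + 1), bBack n m f w k v = 1 := by
  have hSpos : 0 < ∑ i, w (Fin.last n) (v (Fin.last n) i) :=
    Finset.sum_pos (fun i _ => hwpos _ _) univ_nonempty
  have hDpos : ∀ (t : Fin n) (i : Fin (m + 1)),
      0 < ∑ j, w t.castSucc (v t.castSucc j) * f (v t.castSucc j) (v t.succ i) :=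
    fun t i => Finset.sum_pos (fun j _ => mul_pos (hwpos _ _) (hfpos _ _)) univ_nonempty
  have := sum_markov
    (A := fun (t : Fin n) (j i : Fin (m+1)) =>
      (w t.castSucc (v t.castSucc j) * f (v t.castSucc j) (v t.succ i)) /
        ∑ j', w t.castSucc (v t.castSucc j') * f (v t.castSucc j') (v t.succ i))
    (B := fun i => w (Fin.last n) (v (Fin.last n) i) / ∑ i', w (Fin.last n) (v (Fin.last n) i'))
    (fun t i => by rw [← Finset.sum_div, div_self (hDpos t i).ne'])
    (by rw [← Finset.sum_div, div_self hSpos.ne'])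
  rw [← this]
  exact Finset.sum_congr rfl fun k _ => by simp only [bBack]

lemma bBack_pos (n m : ℕ) (f : Z → Z → ℝ) (w : Fin (n + 1) → Z → ℝ)
    (hfpos : ∀ z z', 0 < f z z') (hwpos : ∀ t z, 0 < w t z)
    (k : Fin (n + 1) → Fin (m + 1)) (v : Fin (n + 1) → Fin (m + 1) → Z) :
    0 < bBack n m f w k v := by
  have hSpos : 0 < ∑ i, w (Fin.last n) (v (Fin.last n) i) :=
    Finset.sum_pos (fun i _ => hwpos _ _) univ_nonempty
  have hDpos : ∀ (t : Fin n) (i : Fin (m + 1)),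
      0 < ∑ j, w t.castSucc (v t.castSucc j) * f (v t.castSucc j) (v t.succ i) :=
    fun t i => Finset.sum_pos (fun j _ => mul_pos (hwpos _ _) (hfpos _ _)) univ_nonempty
  exact mul_pos (div_pos (hwpos _ _) hSpos)
    (Finset.prod_pos fun t _ => div_pos (mul_pos (hwpos _ _) (hfpos _ _)) (hDpos t _))

lemma measurePreserving_swapArr [MeasurableSpace Z] (ν : Measure Z) [SigmaFinite ν]
    (n m : ℕ) (k : Fin (n + 1) → Fin (m + 1)) :
    MeasurePreserving (swapArr (Z := Z) n m k)
      (Measure.pi fun _ : Fin (n + 1) => Measure.pi fun _ : Fin (m + 1) => ν)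
      (Measure.pi fun _ : Fin (n + 1) => Measure.pi fun _ : Fin (m + 1) => ν) := by
  have inner : ∀ t : Fin (n + 1),
      MeasurePreserving (fun u : Fin (m + 1) → Z => fun i => u (Equiv.swap 0 (k t) i))
        (Measure.pi fun _ : Fin (m + 1) => ν) (Measure.pi fun _ : Fin (m + 1) => ν) := by
    intro t
    have h := measurePreserving_arrowCongr' (fun _ : Fin (m + 1) => ν)
      (fun _ : Fin (m + 1) => ν) (Equiv.swap (0 : Fin (m+1)) (k t)).symm
      (MeasurableEquiv.refl Z) (fun _ => MeasurePreserving.id ν)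
    have heq : ⇑(MeasurableEquiv.arrowCongr' ((Equiv.swap (0 : Fin (m+1)) (k t)).symm)
        (MeasurableEquiv.refl Z))
        = fun u : Fin (m + 1) → Z => fun i => u (Equiv.swap 0 (k t) i) := by
      funext u i
      rfl
    exact heq ▸ h
  exact measurePreserving_pi _ _ inner

/-- For every measurable `F : Z^T → [0,∞]`,
`∑_k ∫ b(k|v) F(v^{(k)}) (π⊗Φ)(v) ν^{⊗TM}(dv) = ∑_k ∫ b(k|v) F(v^{(k)}) ψ̄(v) ν^{⊗TM}(dv)`
with `ψ̄ = ψ·Ĉ/C`. -/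
theorem backward_path_expectation_identity
    [MeasurableSpace Z] (ν : Measure Z) [SigmaFinite ν] (n m : ℕ)
    (m₀ : Z → ℝ) (f : Z → Z → ℝ) (w : Fin (n + 1) → Z → ℝ)
    (hm₀ : Measurable m₀) (hf : Measurable fun p : Z × Z => f p.1 p.2)
    (hw : ∀ t, Measurable (w t))
    (hm₀pos : ∀ z, 0 < m₀ z) (hfpos : ∀ z z', 0 < f z z') (hwpos : ∀ t z, 0 < w t z)
    (C : ℝ)
    (hC : C = ∫ z, gammaSSM n m₀ f w z ∂(Measure.pi fun _ : Fin (n + 1) => ν))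
    (hCpos : 0 < C)
    (hCint : Integrable (gammaSSM n m₀ f w) (Measure.pi fun _ : Fin (n + 1) => ν))
    (F : (Fin (n + 1) → Z) → ℝ≥0∞) (hF : Measurable F) :
    ∑ k : Fin (n + 1) → Fin (m + 1),
        ∫⁻ v, ENNReal.ofReal (bBack n m f w k v) * F (pathOf n m v k) *
            ENNReal.ofReal (piPhi n m m₀ f w C v)
          ∂(Measure.pi fun _ : Fin (n + 1) => Measure.pi fun _ : Fin (m + 1) => ν)
      = ∑ k : Fin (n + 1) → Fin (m + 1),
          ∫⁻ v, ENNReal.ofReal (bBack n m f w k v) * F (pathOf n m v k) *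
              ENNReal.ofReal (psiPF n m m₀ f w v * Chat n m w v / C)
            ∂(Measure.pi fun _ : Fin (n + 1) => Measure.pi fun _ : Fin (m + 1) => ν) := by
  classical
  have hev : ∀ (t : Fin (n+1)) (i : Fin (m+1)),
      Measurable fun v : Fin (n+1) → Fin (m+1) → Z => v t i :=
    fun t i => (measurable_pi_apply i).comp (measurable_pi_apply t)
  have hfm : ∀ (a b : (Fin (n+1) → Fin (m+1) → Z) → Z), Measurable a → Measurable b →
      Measurable fun v => f (a v) (b v) := fun a b ha hb => hf.comp (ha.prodMk hb)
  have hmb : ∀ k : Fin (n+1) → Fin (m+1), Measurable (bBack n m f w k) := by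
    intro k
    unfold bBack
    refine Measurable.mul ?_ ?_
    · exact ((hw _).comp (hev _ _)).div
        (Finset.measurable_sum _ fun i _ => (hw _).comp (hev _ _))
    · exact Finset.measurable_prod _ fun t _ =>
        (((hw _).comp (hev _ _)).mul (hfm _ _ (hev _ _) (hev _ _))).div
          (Finset.measurable_sum _ fun i _ =>
            ((hw _).comp (hev _ _)).mul (hfm _ _ (hev _ _) (hev _ _)))
  have hmψ : Measurable (psiPF n m m₀ f w) := by
    unfold psiPF
    refine Measurable.mul ?_ ?_
    · exact Finset.measurable_prod _ fun i _ => hm₀.comp (hev _ _)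
    · exact Finset.measurable_prod _ fun t _ => Finset.measurable_prod _ fun i _ =>
        (Finset.measurable_sum _ fun j _ =>
          ((hw _).comp (hev _ _)).mul (hfm _ _ (hev _ _) (hev _ _))).div
          (Finset.measurable_sum _ fun j _ => (hw _).comp (hev _ _))
  have hmc : Measurable (Chat n m w) := by
    unfold Chat
    exact Finset.measurable_prod _ fun t _ =>
      measurable_const.mul (Finset.measurable_sum _ fun i _ => (hw _).comp (hev _ _))
  have hmγ : ∀ k : Fin (n+1) → Fin (m+1),
      Measurable fun v : Fin (n+1) → Fin (m+1) → Z => gammaSSM n m₀ f w (pathOf n m v k) := by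
    intro k
    unfold gammaSSM pathOf
    refine Measurable.mul (Measurable.mul ?_ ?_) ?_
    · exact hm₀.comp (hev _ _)
    · exact Finset.measurable_prod _ fun t _ => hfm _ _ (hev _ _) (hev _ _)
    · exact Finset.measurable_prod _ fun t _ => (hw _).comp (hev _ _)
  have hmπ : Measurable (piPhi n m m₀ f w C) := by
    unfold piPhi
    refine Measurable.mul (Measurable.mul ?_ ?_) ?_
    · exact (hmγ (onePath n m)).div_const C
    · exact Finset.measurable_prod _ fun i _ => hm₀.comp (hev _ _)
    · exact Finset.measurable_prod _ fun t _ => Finset.measurable_prod _ fun i _ =>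
        (Finset.measurable_sum _ fun j _ =>
          ((hw _).comp (hev _ _)).mul (hfm _ _ (hev _ _) (hev _ _))).div
          (Finset.measurable_sum _ fun j _ => (hw _).comp (hev _ _))
  have hmF : ∀ k : Fin (n+1) → Fin (m+1),
      Measurable fun v : Fin (n+1) → Fin (m+1) → Z => F (pathOf n m v k) :=
    fun k => hF.comp (measurable_pi_lambda _ fun t => hev t (k t))
  have hgR : ∀ k : Fin (n+1) → Fin (m+1),
      Measurable fun v : Fin (n+1) → Fin (m+1) → Z =>
        ENNReal.ofReal (bBack n m f w k v) * F (pathOf n m v k) *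
          ENNReal.ofReal (psiPF n m m₀ f w v * Chat n m w v / C) :=
    fun k => ((ENNReal.measurable_ofReal.comp (hmb k)).mul (hmF k)).mul
      (ENNReal.measurable_ofReal.comp ((hmψ.mul hmc).div_const C))
  have hgL : ∀ k : Fin (n+1) → Fin (m+1),
      Measurable fun v : Fin (n+1) → Fin (m+1) → Z =>
        ENNReal.ofReal (bBack n m f w k v) * F (pathOf n m v k) *
          ENNReal.ofReal (piPhi n m m₀ f w C v) :=
    fun k => ((ENNReal.measurable_ofReal.comp (hmb k)).mul (hmF k)).mul
      (ENNReal.measurable_ofReal.comp hmπ)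
  have hψpos : ∀ v : Fin (n+1) → Fin (m+1) → Z, 0 < psiPF n m m₀ f w v := by
    intro v
    exact mul_pos (Finset.prod_pos fun i _ => hm₀pos _)
      (Finset.prod_pos fun t _ => Finset.prod_pos fun i _ => div_pos
        (Finset.sum_pos (fun j _ => mul_pos (hwpos _ _) (hfpos _ _)) univ_nonempty)
        (Finset.sum_pos (fun j _ => hwpos _ _) univ_nonempty))
  have hcpos : ∀ v : Fin (n+1) → Fin (m+1) → Z, 0 < Chat n m w v := by
    intro v
    refine Finset.prod_pos fun t _ => mul_pos (by positivity)
      (Finset.sum_pos (fun i _ => hwpos _ _) univ_nonempty)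
  have hψCnn : ∀ v : Fin (n+1) → Fin (m+1) → Z,
      0 ≤ psiPF n m m₀ f w v * Chat n m w v / C :=
    fun v => le_of_lt (div_pos (mul_pos (hψpos v) (hcpos v)) hCpos)
  have hR : ∀ k : Fin (n+1) → Fin (m+1),
      (∫⁻ v, ENNReal.ofReal (bBack n m f w k v) * F (pathOf n m v k) *
          ENNReal.ofReal (psiPF n m m₀ f w v * Chat n m w v / C)
        ∂(Measure.pi fun _ : Fin (n + 1) => Measure.pi fun _ : Fin (m + 1) => ν))
      = ∫⁻ v, ENNReal.ofReal (bBack n m f w (onePath n m) v) *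
          F (pathOf n m v (onePath n m)) *
          ENNReal.ofReal (psiPF n m m₀ f w v * Chat n m w v / C)
        ∂(Measure.pi fun _ : Fin (n + 1) => Measure.pi fun _ : Fin (m + 1) => ν) := by
    intro k
    rw [← (measurePreserving_swapArr ν n m k).lintegral_comp (hgR k)]
    refine lintegral_congr fun v => ?_
    rw [bBack_swapArr, pathOf_swapArr, psiPF_swapArr, Chat_swapArr]
  have hL : ∀ k : Fin (n+1) → Fin (m+1),
      (∫⁻ v, ENNReal.ofReal (bBack n m f w k v) * F (pathOf n m v k) *
          ENNReal.ofReal (piPhi n m m₀ f w C v)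
        ∂(Measure.pi fun _ : Fin (n + 1) => Measure.pi fun _ : Fin (m + 1) => ν))
      = ∫⁻ v, ENNReal.ofReal (bBack n m f w (onePath n m) v) *
          F (pathOf n m v (onePath n m)) *
          (ENNReal.ofReal (((m : ℝ) + 1) ^ (n + 1)) *
            (ENNReal.ofReal (bBack n m f w k v) *
              ENNReal.ofReal (psiPF n m m₀ f w v * Chat n m w v / C)))
        ∂(Measure.pi fun _ : Fin (n + 1) => Measure.pi fun _ : Fin (m + 1) => ν) := by
    intro k
    rw [← (measurePreserving_swapArr ν n m k).lintegral_comp (hgL k)]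
    refine lintegral_congr fun v => ?_
    rw [bBack_swapArr, pathOf_swapArr]
    congr 1
    rw [piPhi_swapArr, div_mul_eq_mul_div, core_identity n m m₀ f w hfpos hwpos k v]
    rw [show ((m : ℝ) + 1) ^ (n + 1) *
          (bBack n m f w k v * (psiPF n m m₀ f w v * Chat n m w v)) / C
        = ((m : ℝ) + 1) ^ (n + 1) *
          (bBack n m f w k v * (psiPF n m m₀ f w v * Chat n m w v / C)) by ring]
    rw [ENNReal.ofReal_mul (by positivity),
      ENNReal.ofReal_mul (le_of_lt (bBack_pos n m f w hfpos hwpos k v))]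
  calc ∑ k : Fin (n + 1) → Fin (m + 1),
        ∫⁻ v, ENNReal.ofReal (bBack n m f w k v) * F (pathOf n m v k) *
            ENNReal.ofReal (piPhi n m m₀ f w C v)
          ∂(Measure.pi fun _ : Fin (n + 1) => Measure.pi fun _ : Fin (m + 1) => ν)
      = ∑ k : Fin (n + 1) → Fin (m + 1),
        ∫⁻ v, ENNReal.ofReal (bBack n m f w (onePath n m) v) *
            F (pathOf n m v (onePath n m)) *
            (ENNReal.ofReal (((m : ℝ) + 1) ^ (n + 1)) *
              (ENNReal.ofReal (bBack n m f w k v) *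
                ENNReal.ofReal (psiPF n m m₀ f w v * Chat n m w v / C)))
          ∂(Measure.pi fun _ : Fin (n + 1) => Measure.pi fun _ : Fin (m + 1) => ν) :=
        Finset.sum_congr rfl fun k _ => hL k
    _ = ∫⁻ v, ∑ k : Fin (n + 1) → Fin (m + 1),
          ENNReal.ofReal (bBack n m f w (onePath n m) v) *
            F (pathOf n m v (onePath n m)) *
            (ENNReal.ofReal (((m : ℝ) + 1) ^ (n + 1)) *
              (ENNReal.ofReal (bBack n m f w k v) *
                ENNReal.ofReal (psiPF n m m₀ f w v * Chat n m w v / C)))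
          ∂(Measure.pi fun _ : Fin (n + 1) => Measure.pi fun _ : Fin (m + 1) => ν) := by
        refine (lintegral_finset_sum _ fun k _ => ?_).symm
        exact ((ENNReal.measurable_ofReal.comp (hmb _)).mul (hmF _)).mul
          (measurable_const.mul ((ENNReal.measurable_ofReal.comp (hmb k)).mul
            (ENNReal.measurable_ofReal.comp ((hmψ.mul hmc).div_const C))))
    _ = ∫⁻ v, ENNReal.ofReal (((m : ℝ) + 1) ^ (n + 1)) *
          (ENNReal.ofReal (bBack n m f w (onePath n m) v) *
            F (pathOf n m v (onePath n m)) *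
            ENNReal.ofReal (psiPF n m m₀ f w v * Chat n m w v / C))
          ∂(Measure.pi fun _ : Fin (n + 1) => Measure.pi fun _ : Fin (m + 1) => ν) := by
        refine lintegral_congr fun v => ?_
        rw [← Finset.mul_sum, ← Finset.mul_sum, ← Finset.sum_mul,
          ← ENNReal.ofReal_sum_of_nonneg
            (fun k _ => (bBack_pos n m f w hfpos hwpos k v).le),
          sum_bBack n m f w hfpos hwpos v, ENNReal.ofReal_one, one_mul]
        ring
    _ = ENNReal.ofReal (((m : ℝ) + 1) ^ (n + 1)) *
          ∫⁻ v, ENNReal.ofReal (bBack n m f w (onePath n m) v) *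
            F (pathOf n m v (onePath n m)) *
            ENNReal.ofReal (psiPF n m m₀ f w v * Chat n m w v / C)
          ∂(Measure.pi fun _ : Fin (n + 1) => Measure.pi fun _ : Fin (m + 1) => ν) :=
        lintegral_const_mul _ (hgR (onePath n m))
    _ = ∑ k : Fin (n + 1) → Fin (m + 1),
          ∫⁻ v, ENNReal.ofReal (bBack n m f w k v) * F (pathOf n m v k) *
              ENNReal.ofReal (psiPF n m m₀ f w v * Chat n m w v / C)
            ∂(Measure.pi fun _ : Fin (n + 1) => Measure.pi fun _ : Fin (m + 1) => ν) := by
        rw [Finset.sum_congr rfl fun k _ => hR k, Finset.sum_const, Finset.card_univ]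
        rw [nsmul_eq_mul]
        congr 1
        rw [show ((m : ℝ) + 1) = (((m + 1 : ℕ) : ℝ)) by push_cast; ring,
          ← Nat.cast_pow, ENNReal.ofReal_natCast]
        norm_cast
        simp [Fintype.card_fun]

end SSM16
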